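/- Fix n ≥ 1 and masses m₀,…,mₙ > 0. Let x₀,…,xₙ ∈ ℂ × ℝ, with xⱼ = (uⱼ, zⱼ), be pairwise distinct points such that for every j ∈ {0,…,n}: ∑_{i≠j} mᵢ·mⱼ·(zⱼ − zᵢ)/‖xⱼ − xᵢ‖³ = 0, where ‖xⱼ − xᵢ‖ = (|uⱼ − uᵢ|² + (zⱼ − zᵢ)²)^{1/2}. Then z₀ = z₁ = … = zₙ. In particular, every relative equilibrium of the (n+1)-body problem is planar. -/

import Mathlib

open Finset

/-- Every relative equilibrium of the `(n+1)`-body problem is planar: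
if the points `xⱼ = (uⱼ, zⱼ) ∈ ℂ × ℝ` are pairwise distinct and the vertical equations
`∑_{i ≠ j} mᵢ mⱼ (zⱼ - zᵢ)/‖xⱼ - xᵢ‖³ = 0` hold for every `j`, then all the `zⱼ`
coincide. -/
theorem relative_equilibria_are_planar
    (n : ℕ) (hn : 1 ≤ n) (m : Fin (n + 1) → ℝ) (hm : ∀ j, 0 < m j)
    (u : Fin (n + 1) → ℂ) (z : Fin (n + 1) → ℝ)
    (hdist : ∀ i j : Fin (n + 1), i ≠ j → (u i, z i) ≠ (u j, z j))
    (heq : ∀ j : Fin (n + 1),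
      ∑ i ∈ Finset.univ.erase j,
        m i * m j * (z j - z i) /
          (Real.sqrt (‖u j - u i‖ ^ 2 + (z j - z i) ^ 2)) ^ 3 = 0) :
    ∀ i j : Fin (n + 1), z i = z j := by
  -- denominators are positive
  have hden : ∀ i j : Fin (n + 1), i ≠ j →
      0 < (Real.sqrt (‖u j - u i‖ ^ 2 + (z j - z i) ^ 2)) ^ 3 := by
    intro i j hij
    have h : (u i, z i) ≠ (u j, z j) := hdist i j hij
    have hpos : 0 < ‖u j - u i‖ ^ 2 + (z j - z i) ^ 2 := by
      rcases eq_or_ne (u i) (u j) with hu | hu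
      · have hz : z i ≠ z j := by
          intro hz; exact h (by rw [hu, hz])
        have hz' : z j - z i ≠ 0 := sub_ne_zero.mpr (Ne.symm hz)
        have : (z j - z i) ^ 2 > 0 := by positivity
        nlinarith [sq_nonneg (‖u j - u i‖)]
      · have : u j - u i ≠ 0 := sub_ne_zero.mpr (Ne.symm hu)
        have : 0 < ‖u j - u i‖ := by
          exact norm_pos_iff.mpr this
        nlinarith [sq_nonneg (z j - z i)]
    positivity
  -- take a maximizer of z
  obtain ⟨j, -, hjmax⟩ := Finset.exists_max_image (univ : Finset (Fin (n + 1))) z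
    ⟨0, mem_univ 0⟩
  have key : ∀ i : Fin (n + 1), z i = z j := by
    intro i
    rcases eq_or_ne i j with rfl | hij
    · rfl
    have hnonneg : ∀ i ∈ Finset.univ.erase j,
        0 ≤ m i * m j * (z j - z i) /
          (Real.sqrt (‖u j - u i‖ ^ 2 + (z j - z i) ^ 2)) ^ 3 := by
      intro i hi
      have hij' : i ≠ j := (Finset.mem_erase.mp hi).1
      have h1 : 0 ≤ z j - z i := sub_nonneg.mpr (hjmax i (mem_univ i))
      have h2 := hden i j hij'
      have := (hm i).le
      have := (hm j).le
      positivity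
    have hzero := (Finset.sum_eq_zero_iff_of_nonneg hnonneg).mp (heq j) i
      (Finset.mem_erase.mpr ⟨hij, mem_univ i⟩)
    have h2 := hden i j hij
    have hnum : m i * m j * (z j - z i) = 0 := by
      rcases div_eq_zero_iff.mp hzero with h | h
      · exact h
      · exact absurd h h2.ne'
    have hmm : m i * m j ≠ 0 := (mul_pos (hm i) (hm j)).ne'
    have : z j - z i = 0 := by
      rcases mul_eq_zero.mp hnum with h | h
      · exact absurd h hmm
      · exact h
    linarith
  intro a b
  rw [key a, key b]
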